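/- Let P = [p_{ijk}] be a 2×2×2 tensor of the form p_{ijk} = s·a_{1i}a_{2j}a_{3k} + t·b_{1i}b_{2j}b_{3k}, where s,t ∈ ℝ and each vector a_r = (a_{r1},a_{r2}), b_r = (b_{r1},b_{r2}) has coordinates summing to 1. Then the hyperdeterminant satisfies Det(P) = (s·t·det A_1·det A_2·det A_3)², where A_r is the 2×2 matrix with rows a_r, b_r. -/
import Mathlib


/-- for P = s·a1⊗a2⊗a3 + t·b1⊗b2⊗b3 with normalized vectors,
Det(P) = (s·t·det A1·det A2·det A3)². -/
theorem stmt_8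
    (p111 p112 p121 p122 p211 p212 p221 p222 : ℝ)
    (s t : ℝ) (a11 a12 a21 a22 a31 a32 b11 b12 b21 b22 b31 b32 : ℝ)
    (hna1 : a11 + a12 = 1) (hna2 : a21 + a22 = 1) (hna3 : a31 + a32 = 1)
    (hnb1 : b11 + b12 = 1) (hnb2 : b21 + b22 = 1) (hnb3 : b31 + b32 = 1)
    (h111 : p111 = s * (a11 * a21 * a31) + t * (b11 * b21 * b31))
    (h112 : p112 = s * (a11 * a21 * a32) + t * (b11 * b21 * b32))
    (h121 : p121 = s * (a11 * a22 * a31) + t * (b11 * b22 * b31))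
    (h122 : p122 = s * (a11 * a22 * a32) + t * (b11 * b22 * b32))
    (h211 : p211 = s * (a12 * a21 * a31) + t * (b12 * b21 * b31))
    (h212 : p212 = s * (a12 * a21 * a32) + t * (b12 * b21 * b32))
    (h221 : p221 = s * (a12 * a22 * a31) + t * (b12 * b22 * b31))
    (h222 : p222 = s * (a12 * a22 * a32) + t * (b12 * b22 * b32)) :
    4 * p111 * p122 * p212 * p221 + 4 * p112 * p121 * p211 * p222 +
      p111 ^ 2 * p222 ^ 2 + p122 ^ 2 * p211 ^ 2 + p112 ^ 2 * p221 ^ 2 +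
      p121 ^ 2 * p212 ^ 2 -
      2 * p111 * p112 * p221 * p222 - 2 * p111 * p121 * p212 * p222 -
      2 * p111 * p122 * p211 * p222 - 2 * p112 * p121 * p212 * p221 -
      2 * p112 * p122 * p211 * p221 - 2 * p121 * p122 * p211 * p212 =
    (s * t * (a11 * b12 - a12 * b11) * (a21 * b22 - a22 * b21) *
      (a31 * b32 - a32 * b31)) ^ 2 := by
  subst h111 h112 h121 h122 h211 h212 h221 h222; ring
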